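/- arXiv:2111.05822 — 4 statements merged into one kernel-verified Lean document; each statement's English description precedes it below -/
import Mathlib

section
/- Let X and M be reflexive Banach spaces, a : X × M → ℝ a continuous bilinear form, A : X → M' the induced operator ⟨Av, w⟩ = a(v, w), and V = ker A. If there exists β > 0 such that for all nonzero w ∈ M, sup over nonzero v ∈ X of a(v,w)/(‖v‖_X ‖w‖_M) ≥ β, then for every continuous linear functional f ∈ X' vanishing on V, there exists a unique w ∈ M such that a(v, w) = ⟨f, v⟩ for all v ∈ X, and ‖w‖_M ≤ (1/β)‖f‖_{X'}. -/
open NormedSpace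

/-- Hahn–Banach separation from a closed submodule: if `x ∉ S` with `S` closed,
there is a continuous functional vanishing on `S` but not at `x`. -/
lemma exists_functional_vanishing_of_not_mem {E : Type*} [NormedAddCommGroup E]
    [NormedSpace ℝ E] (S : Submodule ℝ E) (hS : IsClosed (S : Set E)) (x : E)
    (hx : x ∉ S) : ∃ φ : E →L[ℝ] ℝ, (∀ s ∈ S, φ s = 0) ∧ φ x ≠ 0 := by
  obtain ⟨φ, u, hxu, hb⟩ := geometric_hahn_banach_point_closed S.convex hS hx
  have hu0 : u < 0 := by simpa using hb 0 S.zero_mem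
  refine ⟨φ, fun s hs => ?_, by nlinarith [hxu]⟩
  by_contra h
  -- scale s to violate the bound
  have := hb (((u - 1) / φ s) • s) (S.smul_mem _ hs)
  rw [map_smul, smul_eq_mul, div_mul_cancel₀ _ h] at this
  linarith

/-- Babuška–Brezzi: `X, M` reflexive Banach spaces, `a : X × M → ℝ` a continuous
bilinear form, `A : X → M'` with `⟨Av, w⟩ = a(v,w)`, `V = ker A`.  If the inf-sup
condition holds with constant `β > 0`, then for every `f ∈ X'` vanishing on `V`
there is a unique `w ∈ M` with `a(v,w) = ⟨f,v⟩` for all `v ∈ X`, and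
`‖w‖ ≤ (1/β)‖f‖`. -/
theorem babuska_brezzi_unique_solution
    {X M : Type*} [NormedAddCommGroup X] [NormedSpace ℝ X] [CompleteSpace X]
    [NormedAddCommGroup M] [NormedSpace ℝ M] [CompleteSpace M]
    (hXrefl : Function.Surjective (inclusionInDoubleDual ℝ X))
    (hMrefl : Function.Surjective (inclusionInDoubleDual ℝ M))
    (a : X →L[ℝ] M →L[ℝ] ℝ)
    (V : Set X) (hV : V = {v : X | ∀ w : M, a v w = 0})
    (β : ℝ) (hβ : 0 < β)
    (hinfsup : ∀ w : M, w ≠ 0 →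
      β ≤ ⨆ v : {v : X // v ≠ 0}, a v.1 w / (‖v.1‖ * ‖w‖)) :
    ∀ f : X →L[ℝ] ℝ, (∀ v ∈ V, f v = 0) →
      (∃! w : M, ∀ v : X, a v w = f v) ∧
      (∀ w : M, (∀ v : X, a v w = f v) → ‖w‖ ≤ (1 / β) * ‖f‖) := by
  intro f hf
  set B : M →L[ℝ] X →L[ℝ] ℝ := a.flip with hB
  -- lower bound: β * ‖w‖ ≤ ‖B w‖
  have hlow : ∀ w : M, β * ‖w‖ ≤ ‖B w‖ := by
    intro w
    rcases eq_or_ne w 0 with rfl | hw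
    · simp
    have hwpos : (0:ℝ) < ‖w‖ := norm_pos_iff.2 hw
    have hne : Nonempty {v : X // v ≠ 0} := by
      by_contra h
      have hemp : IsEmpty {v : X // v ≠ 0} := not_nonempty_iff.mp h
      have : β ≤ ⨆ v : {v : X // v ≠ 0}, a v.1 w / (‖v.1‖ * ‖w‖) := hinfsup w hw
      rw [iSup_of_empty'] at this
      simp [Real.sSup_empty] at this
      linarith
    have hsup : (⨆ v : {v : X // v ≠ 0}, a v.1 w / (‖v.1‖ * ‖w‖)) ≤ ‖B w‖ / ‖w‖ := by
      refine ciSup_le fun v => ?_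
      have hv : (0:ℝ) < ‖v.1‖ := norm_pos_iff.2 v.2
      have h1 : a v.1 w ≤ ‖B w‖ * ‖v.1‖ := by
        have := (B w).le_opNorm v.1
        calc a v.1 w = B w v.1 := rfl
          _ ≤ |B w v.1| := le_abs_self _
          _ ≤ ‖B w‖ * ‖v.1‖ := by simpa using this
      rw [div_le_div_iff₀ (by positivity) hwpos]
      calc a v.1 w * ‖w‖ ≤ ‖B w‖ * ‖v.1‖ * ‖w‖ := by nlinarith
        _ = ‖B w‖ * (‖v.1‖ * ‖w‖) := by ring
    have := (hinfsup w hw).trans hsup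
    rw [le_div_iff₀ hwpos] at this
    linarith
  have hAL : AntilipschitzWith ⟨β⁻¹, le_of_lt (inv_pos.2 hβ)⟩ B :=
    B.antilipschitz_of_bound fun w => by
      have h1 : ‖w‖ * β ≤ ‖B w‖ := by rw [mul_comm]; exact hlow w
      change ‖w‖ ≤ β⁻¹ * ‖B w‖
      rw [inv_mul_eq_div, le_div_iff₀ hβ]
      exact h1
  have hinj : Function.Injective B := hAL.injective
  -- range of B is closed
  have hclosed : IsClosed (Set.range B : Set (X →L[ℝ] ℝ)) :=
    hAL.isClosed_range B.uniformContinuous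
  -- f is in the range of B
  have hmem : f ∈ LinearMap.range (B : M →ₗ[ℝ] (X →L[ℝ] ℝ)) := by
    by_contra hfnot
    have hclosed' : IsClosed ((LinearMap.range (B : M →ₗ[ℝ] (X →L[ℝ] ℝ)) : Submodule ℝ _) :
        Set (X →L[ℝ] ℝ)) := by
      convert hclosed using 1
      exact LinearMap.coe_range _
    obtain ⟨φ, hφ0, hφf⟩ := exists_functional_vanishing_of_not_mem _ hclosed' f hfnot
    obtain ⟨v₀, hv₀⟩ := hXrefl φ
    have hev : ∀ g : X →L[ℝ] ℝ, φ g = g v₀ := by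
      intro g; rw [← hv₀]; rfl
    have hv₀V : v₀ ∈ V := by
      rw [hV]
      intro w
      have : φ (B w) = 0 := hφ0 _ ⟨w, rfl⟩
      rwa [hev (B w)] at this
    have : f v₀ = 0 := hf v₀ hv₀V
    rw [hev f] at hφf
    exact hφf this
  obtain ⟨w₀, hw₀⟩ := hmem
  have hBf : B w₀ = f := hw₀
  have hw₀sol : ∀ v : X, a v w₀ = f v := fun v => by rw [← hBf]; rfl
  have huniq : ∀ w : M, (∀ v : X, a v w = f v) → w = w₀ := by
    intro w hw
    apply hinj
    ext v
    show a v w = a v w₀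
    rw [hw v, hw₀sol v]
  refine ⟨⟨w₀, hw₀sol, huniq⟩, fun w hw => ?_⟩
  have hBw : B w = f := by ext v; exact hw v
  have := hlow w
  rw [hBw] at this
  rw [one_div, inv_mul_eq_div, le_div_iff₀ hβ, mul_comm]
  exact this
end

section
/- Let X and M be reflexive Banach spaces, a : X × M → ℝ a continuous bilinear form satisfying the inf-sup condition with constant β > 0, let A : X → M' be the induced operator and V = ker A. Then the adjoint operator A' : M → X', defined by ⟨v, A'w⟩ = a(v, w), is an isomorphism from M onto the polar set {f ∈ X' : f(v) = 0 for all v ∈ V}, and the inverse has operator norm at most 1/β. -/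
open NormedSpace

/-- Babuška–Brezzi: under the inf-sup condition with constant `β > 0`, the adjoint
operator `A' : M → X'`, `(A'w)(v) = a(v,w)`, is an isomorphism from `M` onto the
polar set `{f ∈ X' : f|_V = 0}` of the kernel `V` of `A`, and its inverse has
norm at most `1/β`. -/
theorem babuska_brezzi_adjoint_iso
    {X M : Type*} [NormedAddCommGroup X] [NormedSpace ℝ X] [CompleteSpace X]
    [NormedAddCommGroup M] [NormedSpace ℝ M] [CompleteSpace M]
    (hXrefl : Function.Surjective (inclusionInDoubleDual ℝ X))
    (hMrefl : Function.Surjective (inclusionInDoubleDual ℝ M))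
    (a : X →L[ℝ] M →L[ℝ] ℝ)
    (V : Set X) (hV : V = {v : X | ∀ w : M, a v w = 0})
    (β : ℝ) (hβ : 0 < β)
    (hinfsup : ∀ w : M, w ≠ 0 →
      β ≤ ⨆ v : {v : X // v ≠ 0}, a v.1 w / (‖v.1‖ * ‖w‖)) :
    (∀ w : M, ∀ v ∈ V, a.flip w v = 0) ∧
    Function.Injective a.flip ∧
    (∀ f : X →L[ℝ] ℝ, (∀ v ∈ V, f v = 0) → ∃ w : M, a.flip w = f) ∧
    (∀ w : M, ‖w‖ ≤ (1 / β) * ‖a.flip w‖) := by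
  -- the norm bound
  have hbound : ∀ w : M, ‖w‖ ≤ (1 / β) * ‖a.flip w‖ := by
    intro w
    rcases eq_or_ne w 0 with rfl | hw
    · simp [one_div, inv_nonneg, le_of_lt hβ]
      done

    · have hw0 : (0:ℝ) < ‖w‖ := norm_pos_iff.mpr hw
      have hsup : (⨆ v : {v : X // v ≠ 0}, a v.1 w / (‖v.1‖ * ‖w‖)) ≤ ‖a.flip w‖ / ‖w‖ := by
        refine Real.iSup_le (fun v => ?_) (by positivity)
        have hv0 : (0:ℝ) < ‖v.1‖ := norm_pos_iff.mpr v.2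
        have h1 : a v.1 w ≤ ‖a.flip w‖ * ‖v.1‖ := by
          have := (a.flip w).le_opNorm v.1
          have h2 : a v.1 w ≤ |a.flip w v.1| := by
            simpa using le_abs_self (a.flip w v.1)
          calc a v.1 w ≤ |a.flip w v.1| := h2
            _ = ‖a.flip w v.1‖ := (Real.norm_eq_abs _).symm
            _ ≤ ‖a.flip w‖ * ‖v.1‖ := this
        have hpos : (0:ℝ) < ‖v.1‖ * ‖w‖ := by positivity
        calc a v.1 w / (‖v.1‖ * ‖w‖) ≤ (‖a.flip w‖ * ‖v.1‖) / (‖v.1‖ * ‖w‖) := by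
              exact div_le_div_of_nonneg_right h1 hpos.le
          _ = ‖a.flip w‖ / ‖w‖ := by
              field_simp
      have hβle : β ≤ ‖a.flip w‖ / ‖w‖ := (hinfsup w hw).trans hsup
      have : β * ‖w‖ ≤ ‖a.flip w‖ := by
        rw [← le_div_iff₀ hw0] at *
        exact hβle
      calc ‖w‖ = (1/β) * (β * ‖w‖) := by field_simp
        _ ≤ (1/β) * ‖a.flip w‖ := by
            apply mul_le_mul_of_nonneg_left this (by positivity)
  -- antilipschitz
  have hanti : AntilipschitzWith ⟨1/β, by positivity⟩ a.flip :=
    a.flip.antilipschitz_of_bound (K := ⟨1/β, by positivity⟩) (by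
      intro x; exact hbound x)
  have hinj : Function.Injective a.flip := hanti.injective
  refine ⟨?_, hinj, ?_, hbound⟩
  · intro w v hv
    rw [hV] at hv
    simpa using hv w
  · -- surjectivity onto the polar set
    intro f hf
    by_contra hcon
    push_neg at hcon
    have hfnotmem : f ∉ Set.range a.flip := by
      rintro ⟨w, hw⟩; exact hcon w hw
    have hclosed : IsClosed (Set.range a.flip) :=
      hanti.isClosed_range a.flip.uniformContinuous
    have hconv : Convex ℝ (Set.range a.flip) := by
      have : Set.range a.flip = ((LinearMap.range (a.flip : M →ₗ[ℝ] (X →L[ℝ] ℝ)) : Submodule ℝ (X →L[ℝ] ℝ)) : Set (X →L[ℝ] ℝ)) := by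
        ext g; simp [LinearMap.mem_range]
      rw [this]
      exact (LinearMap.range (a.flip : M →ₗ[ℝ] (X →L[ℝ] ℝ))).convex
    obtain ⟨φ, u, hS, hfu⟩ := geometric_hahn_banach_closed_point hconv hclosed hfnotmem
    have hu0 : 0 < u := by
      have := hS 0 ⟨0, by simp⟩
      simpa using this
    have hφ0 : ∀ w : M, φ (a.flip w) = 0 := by
      intro w
      by_contra hc
      have hmem : ((u + 1) / φ (a.flip w)) • a.flip w ∈ Set.range a.flip :=
        ⟨((u + 1) / φ (a.flip w)) • w, by simp [map_smul]⟩
      have := hS _ hmem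
      rw [map_smul, smul_eq_mul, div_mul_cancel₀ _ hc] at this
      linarith
    obtain ⟨v, hv⟩ := hXrefl φ
    have hvV : v ∈ V := by
      rw [hV]
      intro w
      have : φ (a.flip w) = a.flip w v := by rw [← hv]; rfl
      have h0 := hφ0 w
      rw [this] at h0
      simpa using h0
    have hfv : φ f = 0 := by
      have : φ f = f v := by rw [← hv]; rfl
      rw [this, hf v hvV]
    linarith
end

section
/- Let 1 < p, q < ∞ and k, k' real numbers. Suppose λ : ℝ³ → ℝ is a polynomial such that λ = u + v with ∫(ρ^{k−1}|u|)^p < ∞, ∫(ρ^{k}|∇u|)^p < ∞, ∫(ρ^{k'−1}|v|)^q < ∞, ∫(ρ^{k'}|∇v|)^q < ∞, where ρ(x) = (1+|x|²)^{1/2}. Then the degree of λ is at most max(⌊1 − 3/p − k⌋, ⌊1 − 3/q − k'⌋). -/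
open MeasureTheory

/-- The weight `ρ(x) = (1 + |x|²)^{1/2}` on ℝ³. -/
noncomputable def rho (x : Fin 3 → ℝ) : ℝ :=
  Real.sqrt (1 + ∑ i, x i ^ 2)

open Filter in
lemma aux_not_integrable_of_frequently
    (f : (Fin 3 → ℝ) → ℝ) (hf0 : ∀ x, 0 ≤ f x) (β C : ℝ) (hC : 0 < C) (hβ : 0 < β)
    (h : ∃ᶠ n : ℕ in atTop, ∃ S : Set (Fin 3 → ℝ), MeasurableSet S ∧
        volume S ≠ ⊤ ∧ ∃ c : ℝ, (∀ x ∈ S, c ≤ f x) ∧ C * (n : ℝ) ^ β ≤ c * (volume S).toReal) :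
    ¬ Integrable f := by
  intro hint
  have htend : Tendsto (fun n : ℕ => C * (n : ℝ) ^ β) atTop atTop := by
    have h1 : Tendsto (fun x : ℝ => C * x ^ β) atTop atTop :=
      (tendsto_rpow_atTop hβ).const_mul_atTop hC
    exact h1.comp tendsto_natCast_atTop_atTop
  obtain ⟨n, ⟨S, hSm, hSfin, c, hcf, hcb⟩, hgt⟩ :=
    (h.and_eventually (htend.eventually_gt_atTop (∫ x, f x))).exists
  have h1 : c * (volume S).toReal ≤ ∫ x in S, f x :=
    setIntegral_ge_of_const_le_real hSm hSfin hcf hint.integrableOn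
  have h2 : ∫ x in S, f x ≤ ∫ x, f x :=
    setIntegral_le_integral hint (Eventually.of_forall hf0)
  linarith

lemma aux_eval_smul {φ : MvPolynomial (Fin 3) ℝ} {n : ℕ}
    (hφ : φ.IsHomogeneous n) (t : ℝ) (y : Fin 3 → ℝ) :
    MvPolynomial.eval (t • y) φ = t ^ n * MvPolynomial.eval y φ := by
  rw [MvPolynomial.eval_eq', MvPolynomial.eval_eq', Finset.mul_sum]
  refine Finset.sum_congr rfl fun d hd => ?_
  have hdn : ∑ i, d i = n := by
    have h1 := hφ (MvPolynomial.mem_support_iff.mp hd)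
    have h2 : (Finsupp.weight 1) d = ∑ i ∈ d.support, d i := by
      simp [Finsupp.weight_apply, Finsupp.sum]
    rw [h2] at h1
    rw [← h1]
    exact (Finset.sum_subset (Finset.subset_univ _)
      (fun i _ hi => Finsupp.notMem_support_iff.mp hi)).symm
  have h3 : ∏ i, (t • y) i ^ d i = t ^ n * ∏ i, y i ^ d i := by
    simp only [Pi.smul_apply, smul_eq_mul, mul_pow]
    rw [Finset.prod_mul_distrib, Finset.prod_pow_eq_pow_sum, hdn]
  rw [h3]; ring

lemma aux_pow_calc (b c2 : ℝ) (hb : 0 < b) (hc2 : 0 < c2) (κ p : ℝ) (n : ℕ) (hn : 1 ≤ n) (d : ℕ) :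
    ((c2 * n) ^ κ * (b * (n : ℝ) ^ d)) ^ p = (c2 ^ κ * b) ^ p * (n : ℝ) ^ ((κ + d) * p) := by
  have hn0 : (0:ℝ) < n := by exact_mod_cast hn
  rw [Real.mul_rpow hc2.le hn0.le,
    show (n:ℝ) ^ d = (n:ℝ) ^ ((d:ℕ):ℝ) from (Real.rpow_natCast n d).symm,
    show c2 ^ κ * (n:ℝ) ^ κ * (b * (n:ℝ) ^ ((d:ℕ):ℝ)) =
      (c2 ^ κ * b) * ((n:ℝ) ^ κ * (n:ℝ) ^ ((d:ℕ):ℝ)) from by ring,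
    ← Real.rpow_add hn0,
    Real.mul_rpow (by positivity) (by positivity),
    ← Real.rpow_mul hn0.le]

lemma rho_nonneg (x : Fin 3 → ℝ) : 0 ≤ rho x := Real.sqrt_nonneg _

lemma one_le_rho (x : Fin 3 → ℝ) : 1 ≤ rho x := by
  have h : 0 ≤ ∑ i, x i ^ 2 := Finset.sum_nonneg fun i _ => sq_nonneg (x i)
  rw [rho]
  calc (1:ℝ) = Real.sqrt 1 := Real.sqrt_one.symm
    _ ≤ Real.sqrt (1 + ∑ i, x i ^ 2) := Real.sqrt_le_sqrt (by linarith)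

lemma aux_side (p k : ℝ) (hp : 1 < p) (d : ℕ)
    (hα : 0 < p * ((d : ℝ) + k - 1) + 3)
    (w : (Fin 3 → ℝ) → ℝ)
    (δ : ℝ) (hδ : 0 < δ) (b c2 : ℝ) (hb : 0 < b) (hc2 : 1 ≤ c2)
    (hfreq : ∃ᶠ n : ℕ in Filter.atTop, 1 ≤ n ∧
      ∃ S : Set (Fin 3 → ℝ), MeasurableSet S ∧ volume S ≠ ⊤ ∧
        (∀ x ∈ S, b * (n : ℝ) ^ d ≤ |w x| ∧ rho x ≤ c2 * n) ∧
        4 * δ ^ 3 * (n : ℝ) ^ 3 ≤ (volume S).toReal) :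
    ¬ Integrable (fun x => (rho x ^ (k - 1) * |w x|) ^ p) := by
  set κ := min (k - 1) 0 with hκ
  have hp0 : 0 < p := lt_trans one_pos hp
  have hc20 : (0:ℝ) < c2 := lt_of_lt_of_le one_pos hc2
  set β := (κ + d) * p + 3 with hβdef
  have hβ : 0 < β := by
    rcases le_or_gt 0 (k - 1) with h | h
    · have hκ' : κ = 0 := min_eq_right h
      have hd0 : (0:ℝ) ≤ (d:ℝ) * p := by positivity
      rw [hβdef, hκ']; linarith
    · have hκ' : κ = k - 1 := min_eq_left h.le
      rw [hβdef, hκ']; nlinarith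
  set C := (c2 ^ κ * b) ^ p * (4 * δ ^ 3) with hC
  have hCpos : 0 < C := by
    apply mul_pos (Real.rpow_pos_of_pos (mul_pos (Real.rpow_pos_of_pos hc20 _) hb) _)
    positivity
  apply aux_not_integrable_of_frequently _
    (fun x => Real.rpow_nonneg
      (mul_nonneg (Real.rpow_nonneg (rho_nonneg x) _) (abs_nonneg _)) _) β C hCpos hβ
  refine hfreq.mono ?_
  rintro n ⟨hn1, S, hSm, hSfin, hpt, hvol⟩
  have hn0 : (0:ℝ) < n := by exact_mod_cast hn1
  refine ⟨S, hSm, hSfin, ((c2 * n) ^ κ * (b * (n : ℝ) ^ d)) ^ p, ?_, ?_⟩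
  · intro x hx
    obtain ⟨h1, h3⟩ := hpt x hx
    have h2 : (1:ℝ) ≤ rho x := one_le_rho x
    have hb1 : (c2 * n) ^ κ ≤ rho x ^ (k - 1) := by
      rcases le_or_gt 0 (k - 1) with h | h
      · have hκ' : κ = 0 := min_eq_right h
        rw [hκ', Real.rpow_zero]
        calc (1:ℝ) = 1 ^ (k - 1) := (Real.one_rpow _).symm
          _ ≤ rho x ^ (k - 1) := Real.rpow_le_rpow zero_le_one h2 h
      · have hκ' : κ = k - 1 := min_eq_left h.le
        rw [hκ']
        exact Real.rpow_le_rpow_of_nonpos (lt_of_lt_of_le one_pos h2) h3 h.le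
    refine Real.rpow_le_rpow (by positivity) ?_ hp0.le
    exact mul_le_mul hb1 h1 (by positivity) (Real.rpow_nonneg (rho_nonneg x) _)
  · rw [aux_pow_calc b c2 hb hc20 κ p n hn1 d]
    calc C * (n : ℝ) ^ β
        = (c2 ^ κ * b) ^ p * (n : ℝ) ^ ((κ + d) * p) * (4 * δ ^ 3 * (n : ℝ) ^ (3:ℝ)) := by
          rw [hC, hβdef, Real.rpow_add hn0]; ring
      _ = (c2 ^ κ * b) ^ p * (n : ℝ) ^ ((κ + d) * p) * (4 * δ ^ 3 * (n : ℝ) ^ (3:ℕ)) := by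
          rw [show ((n:ℝ) ^ (3:ℝ)) = (n:ℝ) ^ ((3:ℕ):ℝ) from by norm_num, Real.rpow_natCast]
      _ ≤ (c2 ^ κ * b) ^ p * (n : ℝ) ^ ((κ + d) * p) * (volume S).toReal := by
          apply mul_le_mul_of_nonneg_left _ (by positivity)
          exact_mod_cast hvol


set_option maxHeartbeats 1000000 in
/-- Any polynomial `λ` belonging to `W^{1,p}_k(ℝ³) + W^{1,q}_{k'}(ℝ³)` has degree
at most `max(⌊1 − 3/p − k⌋, ⌊1 − 3/q − k'⌋)` (with the convention that spaces of
negative-degree polynomials are `{0}`). -/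
theorem polynomial_in_sum_weighted_sobolev_degree
    (p q : ℝ) (hp : 1 < p) (hq : 1 < q) (k k' : ℝ)
    (P : MvPolynomial (Fin 3) ℝ)
    (u v : (Fin 3 → ℝ) → ℝ)
    (hu : Differentiable ℝ u) (hv : Differentiable ℝ v)
    (hsum : ∀ x, MvPolynomial.eval x P = u x + v x)
    (hu0 : Integrable (fun x => (rho x ^ (k - 1) * |u x|) ^ p))
    (hu1 : Integrable (fun x => (rho x ^ k * ‖fderiv ℝ u x‖) ^ p))
    (hv0 : Integrable (fun x => (rho x ^ (k' - 1) * |v x|) ^ q))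
    (hv1 : Integrable (fun x => (rho x ^ k' * ‖fderiv ℝ v x‖) ^ q)) :
    P = 0 ∨ (P.totalDegree : ℝ) ≤ max (⌊1 - 3 / p - k⌋ : ℝ) (⌊1 - 3 / q - k'⌋ : ℝ) := by
  by_contra hcon
  push_neg at hcon
  obtain ⟨hP, hdeg⟩ := hcon
  rw [max_lt_iff] at hdeg
  have hp0 : (0:ℝ) < p := lt_trans one_pos hp
  have hq0 : (0:ℝ) < q := lt_trans one_pos hq
  set d : ℕ := P.totalDegree with hd
  have hfl : ∀ c : ℝ, (⌊c⌋ : ℝ) < (d : ℝ) → c < (d : ℝ) := by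
    intro c hc
    have h3 : ⌊c⌋ < (d : ℤ) := by exact_mod_cast hc
    have h4 : (⌊c⌋ : ℝ) + 1 ≤ (d : ℝ) := by exact_mod_cast h3
    have h5 := Int.lt_floor_add_one c
    linarith
  have h1 : 1 - 3 / p - k < (d : ℝ) := hfl _ hdeg.1
  have h2 : 1 - 3 / q - k' < (d : ℝ) := hfl _ hdeg.2
  have hαp : 0 < p * ((d : ℝ) + k - 1) + 3 := by
    have h3 : p * (1 - 3 / p - k) < p * d := (mul_lt_mul_iff_right₀ hp0).mpr h1
    have h4 : p * (3 / p) = 3 := by field_simp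
    nlinarith
  have hαq : 0 < q * ((d : ℝ) + k' - 1) + 3 := by
    have h3 : q * (1 - 3 / q - k') < q * d := (mul_lt_mul_iff_right₀ hq0).mpr h2
    have h4 : q * (3 / q) = 3 := by field_simp
    nlinarith
  -- the leading homogeneous component is nonzero
  set Pd := MvPolynomial.homogeneousComponent d P with hPdd
  have hPd_ne : Pd ≠ 0 := by
    obtain ⟨m, hm, hms⟩ := Finset.exists_mem_eq_sup P.support
      (MvPolynomial.support_nonempty.mpr hP) (fun s => s.sum fun _ e => e)
    intro hzero
    have hcoeff : MvPolynomial.coeff m Pd = MvPolynomial.coeff m P := by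
      rw [hPdd, MvPolynomial.coeff_homogeneousComponent, if_pos]
      show Finsupp.degree m = d
      rw [hd, MvPolynomial.totalDegree, hms]
      rfl
    exact (MvPolynomial.mem_support_iff.mp hm)
      (by rw [← hcoeff, hzero, MvPolynomial.coeff_zero])
  have hPd_hom : Pd.IsHomogeneous d := MvPolynomial.homogeneousComponent_isHomogeneous d P
  obtain ⟨e, he⟩ : ∃ e : Fin 3 → ℝ, MvPolynomial.eval e Pd ≠ 0 := by
    by_contra hno
    push_neg at hno
    exact hPd_ne (MvPolynomial.funext fun x => by simp [hno x])
  set a0 : ℝ := |MvPolynomial.eval e Pd| with ha0d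
  have ha0 : 0 < a0 := abs_pos.mpr he
  obtain ⟨δ, hδpos, hδ⟩ : ∃ δ, 0 < δ ∧
      ∀ y ∈ Metric.closedBall e δ, a0 / 2 ≤ |MvPolynomial.eval y Pd| := by
    have hca : ContinuousAt (fun y : Fin 3 → ℝ => |MvPolynomial.eval y Pd|) e :=
      (MvPolynomial.continuous_eval Pd).abs.continuousAt
    rw [Metric.continuousAt_iff] at hca
    obtain ⟨ε, hεpos, hε⟩ := hca (a0 / 2) (by linarith)
    refine ⟨ε / 2, by linarith, fun y hy => ?_⟩
    have hlt : dist y e < ε := lt_of_le_of_lt (Metric.mem_closedBall.mp hy) (by linarith)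
    have h6 := hε hlt
    rw [Real.dist_eq] at h6
    have h7 := abs_lt.mp h6
    linarith [h7.1]
  set F : (Fin 3 → ℝ) → ℝ := fun y =>
    ∑ j ∈ Finset.range d, |MvPolynomial.eval y (MvPolynomial.homogeneousComponent j P)| with hF
  have hFc : Continuous F := by
    apply continuous_finset_sum
    exact fun j _ => (MvPolynomial.continuous_eval _).abs
  obtain ⟨M, hM⟩ := (isCompact_closedBall e δ).exists_bound_of_continuousOn hFc.continuousOn
  have hM0 : 0 ≤ M := le_trans (norm_nonneg _) (hM e (Metric.mem_closedBall_self hδpos.le))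
  have hMF : ∀ y ∈ Metric.closedBall e δ, F y ≤ M := by
    intro y hy
    have h6 := hM y hy
    rw [Real.norm_eq_abs] at h6
    exact le_trans (le_abs_self _) h6
  have hexpand : ∀ (t : ℝ) (y : Fin 3 → ℝ), MvPolynomial.eval (t • y) P
      = ∑ j ∈ Finset.range (d + 1),
          t ^ j * MvPolynomial.eval y (MvPolynomial.homogeneousComponent j P) := by
    intro t y
    conv_lhs => rw [← MvPolynomial.sum_homogeneousComponent P]
    rw [map_sum]
    exact Finset.sum_congr rfl fun j _ =>
      aux_eval_smul (MvPolynomial.homogeneousComponent_isHomogeneous j P) t y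
  set R : ℝ := ‖e‖ + δ with hR
  have hRpos : 0 < R := by
    have := norm_nonneg e
    rw [hR]; linarith
  set c2 : ℝ := Real.sqrt (1 + 3 * R ^ 2) with hc2d
  have hc2 : 1 ≤ c2 := by
    rw [hc2d]
    calc (1:ℝ) = Real.sqrt 1 := Real.sqrt_one.symm
      _ ≤ Real.sqrt (1 + 3 * R ^ 2) := Real.sqrt_le_sqrt (by nlinarith)
  have hkey : ∀ n : ℕ, 1 ≤ n → 4 * M / a0 ≤ (n : ℝ) →
      ∀ x ∈ Metric.closedBall ((n : ℝ) • e) (n * δ),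
        a0 / 4 * (n : ℝ) ^ d ≤ |MvPolynomial.eval x P| ∧ rho x ≤ c2 * n := by
    intro n hn1 hn2 x hx
    have hn0 : (0:ℝ) < n := by exact_mod_cast hn1
    have hn1' : (1:ℝ) ≤ (n:ℝ) := by exact_mod_cast hn1
    set y : Fin 3 → ℝ := (n : ℝ)⁻¹ • x with hy
    have hxy : x = (n : ℝ) • y := by
      rw [hy, smul_smul, mul_inv_cancel₀ hn0.ne', one_smul]
    have hdist : dist x ((n:ℝ) • e) ≤ n * δ := Metric.mem_closedBall.mp hx
    have hyball : y ∈ Metric.closedBall e δ := by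
      rw [Metric.mem_closedBall]
      have h8 : y - e = (n : ℝ)⁻¹ • (x - (n : ℝ) • e) := by
        rw [smul_sub, ← hy, smul_smul, inv_mul_cancel₀ hn0.ne', one_smul]
      rw [dist_eq_norm, h8, norm_smul, norm_inv, Real.norm_natCast]
      calc (n:ℝ)⁻¹ * ‖x - (n:ℝ) • e‖ ≤ (n:ℝ)⁻¹ * (n * δ) := by
            apply mul_le_mul_of_nonneg_left _ (by positivity)
            rw [← dist_eq_norm]; exact hdist
        _ = δ := by field_simp
    have hev := hexpand (n : ℝ) y
    rw [← hxy, Finset.sum_range_succ] at hev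
    set A : ℝ := ∑ j ∈ Finset.range d,
        (n:ℝ) ^ j * MvPolynomial.eval y (MvPolynomial.homogeneousComponent j P) with hA
    have hAbound : |A| ≤ (n : ℝ) ^ d / n * M := by
      calc |A| ≤ ∑ j ∈ Finset.range d,
            |(n:ℝ) ^ j * MvPolynomial.eval y (MvPolynomial.homogeneousComponent j P)| :=
              Finset.abs_sum_le_sum_abs _ _
        _ ≤ ∑ j ∈ Finset.range d, (n:ℝ) ^ d / n
              * |MvPolynomial.eval y (MvPolynomial.homogeneousComponent j P)| := by
            apply Finset.sum_le_sum
            intro j hj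
            rw [abs_mul, abs_pow, Nat.abs_cast]
            apply mul_le_mul_of_nonneg_right _ (abs_nonneg _)
            rw [le_div_iff₀ hn0]
            calc (n:ℝ) ^ j * n = (n:ℝ) ^ (j + 1) := by ring
              _ ≤ (n:ℝ) ^ d := pow_le_pow_right₀ hn1' (Finset.mem_range.mp hj)
        _ = (n:ℝ) ^ d / n * F y := by rw [hF, Finset.mul_sum]
        _ ≤ (n:ℝ) ^ d / n * M := mul_le_mul_of_nonneg_left (hMF y hyball) (by positivity)
    have hBlow : a0 / 2 * (n:ℝ) ^ d ≤ |(n:ℝ) ^ d * MvPolynomial.eval y Pd| := by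
      rw [abs_mul, abs_pow, Nat.abs_cast]
      have h9 := hδ y hyball
      calc a0 / 2 * (n:ℝ) ^ d = (n:ℝ) ^ d * (a0 / 2) := by ring
        _ ≤ (n:ℝ) ^ d * |MvPolynomial.eval y Pd| :=
            mul_le_mul_of_nonneg_left h9 (by positivity)
    have htri : |(n:ℝ) ^ d * MvPolynomial.eval y Pd| ≤ |MvPolynomial.eval x P| + |A| := by
      have h7 : (n:ℝ) ^ d * MvPolynomial.eval y Pd = MvPolynomial.eval x P - A := by
        rw [hev]; ring
      rw [h7]
      have h10 := abs_add_le (MvPolynomial.eval x P) (-A)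
      rw [abs_neg] at h10
      calc |MvPolynomial.eval x P - A| = |MvPolynomial.eval x P + -A| := by ring_nf
        _ ≤ |MvPolynomial.eval x P| + |A| := h10
    have hMn : M / n ≤ a0 / 4 := by
      rw [div_le_iff₀ ha0] at hn2
      rw [div_le_iff₀ hn0]
      nlinarith
    constructor
    · have h8 : (n:ℝ) ^ d / n * M ≤ a0 / 4 * (n:ℝ) ^ d := by
        calc (n:ℝ) ^ d / n * M = (n:ℝ) ^ d * (M / n) := by ring
          _ ≤ (n:ℝ) ^ d * (a0 / 4) := mul_le_mul_of_nonneg_left hMn (by positivity)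
          _ = a0 / 4 * (n:ℝ) ^ d := by ring
      linarith
    · have hxnorm : ‖x‖ ≤ n * R := by
        calc ‖x‖ = ‖x - (n:ℝ) • e + (n:ℝ) • e‖ := by rw [sub_add_cancel]
          _ ≤ ‖x - (n:ℝ) • e‖ + ‖(n:ℝ) • e‖ := norm_add_le _ _
          _ ≤ n * δ + n * ‖e‖ := by
              apply add_le_add
              · rw [← dist_eq_norm]; exact hdist
              · rw [norm_smul, Real.norm_natCast]
          _ = n * R := by rw [hR]; ring
      have hsum2 : ∑ i, x i ^ 2 ≤ 3 * ((n:ℝ) * R) ^ 2 := by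
        have hcard : ∑ _i : Fin 3, ((n:ℝ) * R) ^ 2 = 3 * ((n:ℝ) * R) ^ 2 := by
          rw [Finset.sum_const, Finset.card_univ, Fintype.card_fin]
          norm_num
        rw [← hcard]
        apply Finset.sum_le_sum
        intro i _
        have h9 : |x i| ≤ ‖x‖ := by
          have h10 := norm_le_pi_norm x i
          rwa [Real.norm_eq_abs] at h10
        calc x i ^ 2 = |x i| ^ 2 := (sq_abs _).symm
          _ ≤ ((n:ℝ) * R) ^ 2 := pow_le_pow_left₀ (abs_nonneg _) (h9.trans hxnorm) 2
      calc rho x = Real.sqrt (1 + ∑ i, x i ^ 2) := rfl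
        _ ≤ Real.sqrt ((n:ℝ) ^ 2 * (1 + 3 * R ^ 2)) := by
            apply Real.sqrt_le_sqrt
            have h11 : (1:ℝ) ≤ (n:ℝ) ^ 2 := by nlinarith
            nlinarith [hsum2]
        _ = (n:ℝ) * Real.sqrt (1 + 3 * R ^ 2) := by
            rw [Real.sqrt_mul (sq_nonneg _), Real.sqrt_sq hn0.le]
        _ = c2 * n := by rw [hc2d]; ring
  -- balls, pigeonhole sets
  set Bn : ℕ → Set (Fin 3 → ℝ) := fun n => Metric.closedBall ((n:ℝ) • e) (n * δ) with hBn
  set Un : ℕ → Set (Fin 3 → ℝ) := fun n => Bn n ∩ {x | |v x| ≤ |u x|} with hUn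
  set Vn : ℕ → Set (Fin 3 → ℝ) := fun n => Bn n ∩ {x | |u x| ≤ |v x|} with hVn
  have hvolB : ∀ n : ℕ, volume (Bn n) = ENNReal.ofReal ((2 * (n * δ)) ^ 3) := by
    intro n
    rw [hBn]
    rw [Real.volume_pi_closedBall _ (by positivity)]
    norm_num
  have hUm : ∀ n, MeasurableSet (Un n) := fun n =>
    measurableSet_closedBall.inter
      (measurableSet_le hv.continuous.abs.measurable hu.continuous.abs.measurable)
  have hVm : ∀ n, MeasurableSet (Vn n) := fun n =>
    measurableSet_closedBall.inter
      (measurableSet_le hu.continuous.abs.measurable hv.continuous.abs.measurable)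
  have hUfin : ∀ n, volume (Un n) ≠ ⊤ := fun n =>
    ne_top_of_le_ne_top (by rw [hvolB n]; exact ENNReal.ofReal_ne_top)
      (measure_mono Set.inter_subset_left)
  have hVfin : ∀ n, volume (Vn n) ≠ ⊤ := fun n =>
    ne_top_of_le_ne_top (by rw [hvolB n]; exact ENNReal.ofReal_ne_top)
      (measure_mono Set.inter_subset_left)
  have hcover : ∀ n, (volume (Bn n)).toReal ≤ (volume (Un n)).toReal + (volume (Vn n)).toReal := by
    intro n
    have hsub : Bn n ⊆ Un n ∪ Vn n := by
      intro x hx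
      rcases le_total (|v x|) (|u x|) with h | h
      · exact Or.inl ⟨hx, h⟩
      · exact Or.inr ⟨hx, h⟩
    have hle : volume (Bn n) ≤ volume (Un n) + volume (Vn n) :=
      le_trans (measure_mono hsub) (measure_union_le _ _)
    have h6 := ENNReal.toReal_mono (ENNReal.add_ne_top.mpr ⟨hUfin n, hVfin n⟩) hle
    rwa [ENNReal.toReal_add (hUfin n) (hVfin n)] at h6
  have hBv : ∀ n : ℕ, (volume (Bn n)).toReal = (2 * (n * δ)) ^ 3 := by
    intro n
    rw [hvolB n, ENNReal.toReal_ofReal (by positivity)]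
  -- pointwise lower bounds on Un / Vn
  have hptU : ∀ n : ℕ, 1 ≤ n → 4 * M / a0 ≤ (n : ℝ) →
      ∀ x ∈ Un n, a0 / 8 * (n : ℝ) ^ d ≤ |u x| ∧ rho x ≤ c2 * n := by
    intro n hn1 hn2 x hx
    obtain ⟨hxB, hxuv⟩ := hx
    obtain ⟨hk1, hk2⟩ := hkey n hn1 hn2 x hxB
    refine ⟨?_, hk2⟩
    have h6 : |MvPolynomial.eval x P| ≤ |u x| + |v x| := by
      rw [hsum x]; exact abs_add_le _ _
    have h7 : |v x| ≤ |u x| := hxuv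
    linarith
  have hptV : ∀ n : ℕ, 1 ≤ n → 4 * M / a0 ≤ (n : ℝ) →
      ∀ x ∈ Vn n, a0 / 8 * (n : ℝ) ^ d ≤ |v x| ∧ rho x ≤ c2 * n := by
    intro n hn1 hn2 x hx
    obtain ⟨hxB, hxuv⟩ := hx
    obtain ⟨hk1, hk2⟩ := hkey n hn1 hn2 x hxB
    refine ⟨?_, hk2⟩
    have h6 : |MvPolynomial.eval x P| ≤ |u x| + |v x| := by
      rw [hsum x]; exact abs_add_le _ _
    have h7 : |u x| ≤ |v x| := hxuv
    linarith
  -- eventual pigeonhole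
  have hmain : ∀ᶠ n : ℕ in Filter.atTop,
      (1 ≤ n ∧ ∃ S : Set (Fin 3 → ℝ), MeasurableSet S ∧ volume S ≠ ⊤ ∧
        (∀ x ∈ S, a0 / 8 * (n : ℝ) ^ d ≤ |u x| ∧ rho x ≤ c2 * n) ∧
        4 * δ ^ 3 * (n : ℝ) ^ 3 ≤ (volume S).toReal) ∨
      (1 ≤ n ∧ ∃ S : Set (Fin 3 → ℝ), MeasurableSet S ∧ volume S ≠ ⊤ ∧
        (∀ x ∈ S, a0 / 8 * (n : ℝ) ^ d ≤ |v x| ∧ rho x ≤ c2 * n) ∧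
        4 * δ ^ 3 * (n : ℝ) ^ 3 ≤ (volume S).toReal) := by
    filter_upwards [Filter.eventually_ge_atTop 1,
      tendsto_natCast_atTop_atTop.eventually_ge_atTop (4 * M / a0)] with n hn1 hn2
    have hUV := hcover n
    have hhalf : 4 * δ ^ 3 * (n : ℝ) ^ 3 = (2 * ((n : ℝ) * δ)) ^ 3 / 2 := by ring
    rcases le_total ((volume (Bn n)).toReal / 2) ((volume (Un n)).toReal) with h | h
    · left
      refine ⟨hn1, Un n, hUm n, hUfin n, hptU n hn1 hn2, ?_⟩
      rw [hhalf, ← hBv n]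
      linarith
    · right
      refine ⟨hn1, Vn n, hVm n, hVfin n, hptV n hn1 hn2, ?_⟩
      rw [hhalf, ← hBv n]
      linarith
  rcases Filter.frequently_or_distrib.mp hmain.frequently with hfu | hfv
  · exact aux_side p k hp d hαp u δ hδpos (a0 / 8) c2 (by positivity) hc2 hfu hu0
  · exact aux_side q k' hq d hαq v δ hδpos (a0 / 8) c2 (by positivity) hc2 hfv hv0
end

section
/- Let X be a reflexive Banach space, M a reflexive Banach space, and a : X × M → ℝ a continuous bilinear form satisfying the inf-sup condition with constant β > 0 and such that the kernel V = {v ∈ X : a(v,w) = 0 for all w ∈ M} is trivial. Then for any g ∈ M' there exists a unique v ∈ X with a(v, w) = ⟨g, w⟩ for all w ∈ M, and ‖v‖_X ≤ (1/β)‖g‖_{M'}. -/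
open NormedSpace

/-- Babuška–Brezzi with trivial kernel: if `X, M` are reflexive Banach spaces,
`a : X × M → ℝ` a continuous bilinear form satisfying the inf-sup condition with
constant `β > 0`, and the kernel `V = {v : a(v,·) = 0}` is trivial, then for any
`g ∈ M'` there is a unique `v ∈ X` with `a(v,w) = ⟨g,w⟩` for all `w`, and
`‖v‖ ≤ (1/β)‖g‖`. -/
theorem babuska_brezzi_trivial_kernel
    {X M : Type*} [NormedAddCommGroup X] [NormedSpace ℝ X] [CompleteSpace X]
    [NormedAddCommGroup M] [NormedSpace ℝ M] [CompleteSpace M]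
    (hXrefl : Function.Surjective (inclusionInDoubleDual ℝ X))
    (hMrefl : Function.Surjective (inclusionInDoubleDual ℝ M))
    (a : X →L[ℝ] M →L[ℝ] ℝ)
    (hker : ∀ v : X, (∀ w : M, a v w = 0) → v = 0)
    (β : ℝ) (hβ : 0 < β)
    (hinfsup : ∀ w : M, w ≠ 0 →
      β ≤ ⨆ v : {v : X // v ≠ 0}, a v.1 w / (‖v.1‖ * ‖w‖)) :
    ∀ g : M →L[ℝ] ℝ,
      (∃! v : X, ∀ w : M, a v w = g w) ∧
      (∀ v : X, (∀ w : M, a v w = g w) → ‖v‖ ≤ (1 / β) * ‖g‖) := by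
  -- uniqueness holds in general
  have huniq : ∀ (g : M →L[ℝ] ℝ) (v₁ v₂ : X), (∀ w, a v₁ w = g w) → (∀ w, a v₂ w = g w) →
      v₁ = v₂ := by
    intro g v₁ v₂ h₁ h₂
    have h : v₁ - v₂ = 0 := by
      apply hker
      intro w
      simp [h₁ w, h₂ w]
    exact sub_eq_zero.mp h
  rcases subsingleton_or_nontrivial X with hX | hX
  · -- degenerate case: X trivial
    rcases subsingleton_or_nontrivial M with hM | hM
    · intro g
      refine ⟨⟨0, fun w => ?_, fun y _ => Subsingleton.elim _ _⟩, fun v _ => ?_⟩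
      · have hw : w = 0 := Subsingleton.elim _ _
        simp [hw]
      · have hv : v = 0 := Subsingleton.elim _ _
        rw [hv, norm_zero]
        positivity
    · -- M nontrivial : contradiction with inf-sup
      exfalso
      obtain ⟨w, hw⟩ := exists_ne (0 : M)
      have hle := hinfsup w hw
      haveI : IsEmpty {v : X // v ≠ 0} := ⟨fun v => v.2 (Subsingleton.elim _ _)⟩
      rw [show (⨆ v : {v : X // v ≠ 0}, a v.1 w / (‖v.1‖ * ‖w‖)) = 0 from Real.iSup_of_isEmpty _] at hle
      linarith
  · -- main case
    set B : M →L[ℝ] (X →L[ℝ] ℝ) := a.flip with hB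
    haveI : Nonempty {v : X // v ≠ 0} := by
      obtain ⟨x, hx⟩ := exists_ne (0 : X)
      exact ⟨⟨x, hx⟩⟩
    -- B is bounded below
    have hbb : ∀ w : M, β * ‖w‖ ≤ ‖B w‖ := by
      intro w
      rcases eq_or_ne w 0 with rfl | hw
      · simp
      · have hwpos : (0:ℝ) < ‖w‖ := norm_pos_iff.mpr hw
        rw [← le_div_iff₀ hwpos]
        refine (hinfsup w hw).trans (ciSup_le fun v => ?_)
        have hvpos : (0:ℝ) < ‖v.1‖ := norm_pos_iff.mpr v.2
        have h1 : a v.1 w ≤ ‖B w‖ * ‖v.1‖ := by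
          calc a v.1 w = B w v.1 := rfl
            _ ≤ ‖B w v.1‖ := le_abs_self _
            _ ≤ ‖B w‖ * ‖v.1‖ := (B w).le_opNorm _
        calc a v.1 w / (‖v.1‖ * ‖w‖) ≤ (‖B w‖ * ‖v.1‖) / (‖v.1‖ * ‖w‖) := by
              gcongr
          _ = ‖B w‖ / ‖w‖ := by
              rw [mul_comm ‖v.1‖ ‖w‖]
              exact mul_div_mul_right _ _ hvpos.ne'
    have hbb' : ∀ w : M, ‖w‖ ≤ β⁻¹ * ‖B w‖ := by
      intro w
      rw [le_inv_mul_iff₀ hβ]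
      exact hbb w
    have hanti : AntilipschitzWith (⟨β, hβ.le⟩ : NNReal)⁻¹ B :=
      AddMonoidHomClass.antilipschitz_of_bound B (by
        intro x
        exact hbb' x)
    -- kernel of B is trivial
    have hBinj : LinearMap.ker (B : M →ₗ[ℝ] (X →L[ℝ] ℝ)) = ⊥ := by
      rw [LinearMap.ker_eq_bot]
      exact hanti.injective
    -- range of B is closed
    have hclosed : IsClosed (Set.range B) := hanti.isClosed_range B.uniformContinuous
    -- range of B is everything
    have hBsurj : LinearMap.range (B : M →ₗ[ℝ] (X →L[ℝ] ℝ)) = ⊤ := by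
      by_contra hne
      obtain ⟨f, hf⟩ : ∃ f : X →L[ℝ] ℝ, f ∉ LinearMap.range (B : M →ₗ[ℝ] (X →L[ℝ] ℝ)) := by
        by_contra h
        push_neg at h
        exact hne (LinearMap.range_eq_top.mpr fun f => (h f))
      have hconv : Convex ℝ (LinearMap.range (B : M →ₗ[ℝ] (X →L[ℝ] ℝ)) : Set (X →L[ℝ] ℝ)) :=
        (LinearMap.range (B : M →ₗ[ℝ] (X →L[ℝ] ℝ))).convex
      have hcl : IsClosed (LinearMap.range (B : M →ₗ[ℝ] (X →L[ℝ] ℝ)) : Set (X →L[ℝ] ℝ)) := by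
        have heq : (LinearMap.range (B : M →ₗ[ℝ] (X →L[ℝ] ℝ)) : Set (X →L[ℝ] ℝ)) = Set.range B := by
          ext x
          constructor
          · rintro ⟨y, rfl⟩; exact ⟨y, rfl⟩
          · rintro ⟨y, rfl⟩; exact ⟨y, rfl⟩
        rw [heq]
        exact hclosed
      obtain ⟨ψ, u, hψf, hψp⟩ := geometric_hahn_banach_point_closed hconv hcl hf
      -- ψ vanishes on the range
      have hψ0 : ∀ w : M, ψ (B w) = 0 := by
        intro w
        by_contra h0
        -- choose t with t * ψ (B w) < u
        obtain ⟨t, ht⟩ : ∃ t : ℝ, t * ψ (B w) < u := by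
          rcases lt_or_gt_of_ne h0 with hneg | hpos
          · exact ⟨(u - 1) / ψ (B w) + 1, by
              have : ((u - 1) / ψ (B w) + 1) * ψ (B w) = (u - 1) + ψ (B w) := by
                field_simp
              rw [this]; linarith⟩
          · exact ⟨(u - 1) / ψ (B w) - 1, by
              have : ((u - 1) / ψ (B w) - 1) * ψ (B w) = (u - 1) - ψ (B w) := by
                field_simp
              rw [this]; linarith⟩
        have hmem : (t • (B w)) ∈ (LinearMap.range (B : M →ₗ[ℝ] (X →L[ℝ] ℝ)) : Set (X →L[ℝ] ℝ)) := by
          exact ⟨t • w, by simp⟩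
        have := hψp _ hmem
        rw [map_smul, smul_eq_mul] at this
        linarith
      -- ψ comes from some v by reflexivity
      obtain ⟨v, hv⟩ := hXrefl ψ
      have hv0 : v = 0 := by
        apply hker
        intro w
        have : ψ (B w) = 0 := hψ0 w
        rw [← hv] at this
        exact (by simpa [NormedSpace.dual_def] using this : B w v = 0)
      have : ψ = 0 := by rw [← hv, hv0, map_zero]
      have h0mem : (0 : X →L[ℝ] ℝ) ∈ (LinearMap.range (B : M →ₗ[ℝ] (X →L[ℝ] ℝ)) : Set (X →L[ℝ] ℝ)) :=
        (LinearMap.range _).zero_mem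
      have := hψp _ h0mem
      rw [map_zero] at this
      rw [‹ψ = 0›] at hψf
      simp at hψf
      linarith
    -- B as a continuous linear equivalence
    let e : M ≃L[ℝ] (X →L[ℝ] ℝ) := ContinuousLinearEquiv.ofBijective B hBinj hBsurj
    intro g
    -- construct the solution
    let φ : (X →L[ℝ] ℝ) →L[ℝ] ℝ := g.comp (e.symm : (X →L[ℝ] ℝ) →L[ℝ] M)
    obtain ⟨v, hv⟩ := hXrefl φ
    have hsol : ∀ w : M, a v w = g w := by
      intro w
      have h1 : a v w = B w v := rfl
      have h2 : (inclusionInDoubleDual ℝ X v) (B w) = B w v := NormedSpace.dual_def ℝ X v (B w)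
      have h3 : φ (B w) = g (e.symm (B w)) := rfl
      have h4 : e.symm (B w) = w := by
        have : (e : M → (X →L[ℝ] ℝ)) w = B w := rfl
        rw [← this, ContinuousLinearEquiv.symm_apply_apply]
      rw [h1, ← h2, hv, h3, h4]
    refine ⟨⟨v, hsol, fun y hy => huniq g y v hy hsol⟩, ?_⟩
    -- the norm bound
    intro v' hv'
    have hveq : ‖v'‖ = ‖inclusionInDoubleDual ℝ X v'‖ :=
      ((inclusionInDoubleDualLi ℝ (E := X)).norm_map v').symm
    rw [hveq]
    apply ContinuousLinearMap.opNorm_le_bound _ (by positivity)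
    intro f
    obtain ⟨w, hw⟩ := LinearMap.range_eq_top.mp hBsurj f
    have h2 : (inclusionInDoubleDual ℝ X v') f = a v' w := by
      rw [NormedSpace.dual_def, ← hw]; rfl
    rw [h2, hv' w]
    calc ‖g w‖ ≤ ‖g‖ * ‖w‖ := g.le_opNorm w
      _ ≤ ‖g‖ * (β⁻¹ * ‖B w‖) := by
          exact mul_le_mul_of_nonneg_left (hbb' w) (norm_nonneg g)
      _ = 1 / β * ‖g‖ * ‖f‖ := by
          rw [show (B w : X →L[ℝ] ℝ) = f from hw]
          ring
end
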